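/- Let s > 1 and let X be a random variable with the Zeta law of parameter s. For a prime p, let ν_p(X) denote the p-adic valuation of X. Then the random variables (ν_p(X))_p, indexed by the primes, are mutually independent, and for each prime p the variable 1 + ν_p(X) follows the geometric law of parameter 1 − p^{-s}; that is, for all distinct primes p₁, …, p_r and all nonnegative integers a₁, …, a_r, P(ν_{p₁}(X) = a₁, …, ν_{p_r}(X) = a_r) = ∏_{i=1}^r (1 − p_i^{-s}) p_i^{-s a_i}. -/

import Mathlib

open MeasureTheory
open scoped ENNReal

/-- The sum `ζ(s) = ∑_{n ≥ 1} n ^ (-s)` (the `n = 0` term vanishes since `0 ^ (-s) = 0`). -/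
noncomputable def zetaSum (s : ℝ) : ℝ := ∑' n : ℕ, (n : ℝ) ^ (-s)

/-- The Zeta law of parameter `s`: the probability measure on the positive integers
assigning mass `n ^ (-s) / ζ(s)` to each `n ≥ 1`. -/
noncomputable def zetaMeasure (s : ℝ) : Measure ℕ :=
  Measure.count.withDensity fun n => ENNReal.ofReal ((n : ℝ) ^ (-s) / zetaSum s)

/-- If `X` follows the Zeta law of parameter `s > 1`, then the `p`-adic valuations
`ν_p(X)` (for `p` prime) are mutually independent and `1 + ν_p(X)` is geometric of
parameter `1 - p ^ (-s)`: for distinct primes `p₁, …, p_r` and any `a₁, …, a_r ∈ ℕ`,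
`P(ν_{p₁}(X) = a₁, …, ν_{p_r}(X) = a_r) = ∏ i, (1 - p_i ^ (-s)) * (p_i ^ (-s)) ^ (a i)`. -/
lemma zm_apply (s : ℝ) (E : Set ℕ) :
    zetaMeasure s E = ∑' n : ℕ, E.indicator
      (fun n => ENNReal.ofReal ((n : ℝ) ^ (-s) / zetaSum s)) n := by
  rw [zetaMeasure, withDensity_apply _ (MeasurableSet.of_discrete (s := E)),
    ← lintegral_indicator (MeasurableSet.of_discrete (s := E)) _, lintegral_count]

lemma summable_rpow (s : ℝ) (hs : 1 < s) : Summable (fun n : ℕ => (n : ℝ) ^ (-s)) :=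
  Real.summable_nat_rpow.mpr (by linarith)

lemma zetaSum_pos (s : ℝ) (hs : 1 < s) : 0 < zetaSum s := by
  have h := Summable.le_tsum (summable_rpow s hs) 1 (fun n _ => Real.rpow_nonneg (n.cast_nonneg) _)
  simp only [Nat.cast_one, Real.one_rpow] at h
  exact lt_of_lt_of_le one_pos h

lemma zm_univ (s : ℝ) (hs : 1 < s) : zetaMeasure s Set.univ = 1 := by
  rw [zm_apply]
  simp only [Set.indicator_univ]
  rw [← ENNReal.ofReal_tsum_of_nonneg
    (fun n => div_nonneg (Real.rpow_nonneg (n.cast_nonneg) _) (zetaSum_pos s hs).le)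
    ((summable_rpow s hs).div_const _)]
  rw [tsum_div_const, show (∑' (x : ℕ), (x:ℝ) ^ (-s)) = zetaSum s from rfl,
    div_self (zetaSum_pos s hs).ne', ENNReal.ofReal_one]

lemma zm_ne_top (s : ℝ) (hs : 1 < s) (E : Set ℕ) : zetaMeasure s E ≠ ⊤ := by
  refine ne_top_of_le_ne_top ?_ (measure_mono (Set.subset_univ E))
  rw [zm_univ s hs]; exact ENNReal.one_ne_top

lemma f_zero (s : ℝ) (hs : 1 < s) :
    ENNReal.ofReal ((0 : ℕ) ^ (-s) / zetaSum s) = 0 := by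
  rw [Nat.cast_zero, Real.zero_rpow (by linarith : -s ≠ 0), zero_div, ENNReal.ofReal_zero]

lemma zm_scale (s : ℝ) (hs : 1 < s) (q : ℕ) (hq : q.Prime) (S : Finset ℕ)
    (hqS : q ∉ S) (a : ℕ → ℕ) (b : ℕ) :
    zetaMeasure s ({x | b ≤ x.factorization q} ∩ {x | ∀ p ∈ S, x.factorization p = a p})
      = ENNReal.ofReal ((q : ℝ) ^ (-s)) ^ b
        * zetaMeasure s {x | ∀ p ∈ S, x.factorization p = a p} := by
  set f : ℕ → ℝ≥0∞ := fun n => ENNReal.ofReal ((n : ℝ) ^ (-s) / zetaSum s) with hfdef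
  set E : Set ℕ := {x | ∀ p ∈ S, x.factorization p = a p} with hE
  set F : Set ℕ := {x | b ≤ x.factorization q} ∩ E with hF
  have hqb : q ^ b ≠ 0 := pow_ne_zero b hq.ne_zero
  have hf0 : f 0 = 0 := f_zero s hs
  have hind0 : ∀ A : Set ℕ, A.indicator f 0 = 0 := by
    intro A; by_cases h : (0 : ℕ) ∈ A <;> simp [h, hf0]
  rw [zm_apply, zm_apply, ← ENNReal.tsum_mul_left]
  have hinj : Function.Injective (fun m : ℕ => q ^ b * m) := fun m₁ m₂ h =>
    Nat.eq_of_mul_eq_mul_left (Nat.pos_of_ne_zero hqb) h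
  have hsupp : Function.support (F.indicator f) ⊆ Set.range (fun m : ℕ => q ^ b * m) := by
    intro n hn
    have hnF : n ∈ F := by
      by_contra h
      exact hn (Set.indicator_of_notMem h f)
    have hn0 : n ≠ 0 := by
      rintro rfl
      exact hn (hind0 F)
    have hdvd : q ^ b ∣ n := by
      have h1 : b ≤ n.factorization q := hnF.1
      exact (Nat.Prime.pow_dvd_iff_le_factorization hq hn0).mpr h1
    obtain ⟨m, rfl⟩ := hdvd
    exact ⟨m, rfl⟩
  rw [← hinj.tsum_eq hsupp]
  refine tsum_congr fun m => ?_
  rcases eq_or_ne m 0 with rfl | hm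
  · simp only [mul_zero, hind0, mul_zero, ← hfdef]
  -- m ≠ 0
  have hfac : (q ^ b * m).factorization = Finsupp.single q b + m.factorization := by
    rw [Nat.factorization_mul hqb hm, Nat.Prime.factorization_pow hq]
  have hmem : (q ^ b * m ∈ F) ↔ m ∈ E := by
    simp only [hF, hE, Set.mem_inter_iff, Set.mem_setOf_eq, hfac, Finsupp.add_apply,
      Finsupp.single_apply]
    constructor
    · rintro ⟨-, h2⟩ p hp
      have hpq : ¬ q = p := fun h => hqS (h ▸ hp)
      simpa [hpq] using h2 p hp
    · intro h
      refine ⟨by simp, fun p hp => ?_⟩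
      have hpq : ¬ q = p := fun h' => hqS (h' ▸ hp)
      simpa [hpq] using h p hp
  have hfval : f (q ^ b * m) = ENNReal.ofReal ((q : ℝ) ^ (-s)) ^ b * f m := by
    have hcast : ((q ^ b * m : ℕ) : ℝ) ^ (-s) = ((q : ℝ) ^ (-s)) ^ b * (m : ℝ) ^ (-s) := by
      push_cast
      rw [Real.mul_rpow (by positivity) (by positivity),
        ← Real.rpow_natCast (q : ℝ) b, ← Real.rpow_natCast ((q : ℝ) ^ (-s)) b,
        ← Real.rpow_mul (by positivity), ← Real.rpow_mul (by positivity), mul_comm (b : ℝ) (-s)]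
    simp only [hfdef, hcast, mul_div_assoc]
    rw [ENNReal.ofReal_mul (by positivity), ENNReal.ofReal_pow (by positivity)]
  by_cases hmE : m ∈ E
  · rw [Set.indicator_of_mem (hmem.mpr hmE) f, Set.indicator_of_mem hmE f, hfval]
  · rw [Set.indicator_of_notMem (fun h => hmE (hmem.mp h)) f,
      Set.indicator_of_notMem hmE f, mul_zero]

lemma zm_key (s : ℝ) (hs : 1 < s) (S : Finset ℕ) (hS : ∀ p ∈ S, Nat.Prime p) (a : ℕ → ℕ) :
    zetaMeasure s {x | ∀ p ∈ S, x.factorization p = a p}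
      = ∏ p ∈ S, ENNReal.ofReal ((1 - (p : ℝ) ^ (-s)) * ((p : ℝ) ^ (-s)) ^ (a p)) := by
  classical
  induction S using Finset.induction with
  | empty => simpa using zm_univ s hs
  | @insert q S hqS ih =>
    have hq : Nat.Prime q := hS q (Finset.mem_insert_self q S)
    have hS' : ∀ p ∈ S, Nat.Prime p := fun p hp => hS p (Finset.mem_insert_of_mem hp)
    set E : Set ℕ := {x | ∀ p ∈ S, x.factorization p = a p} with hE
    set b : ℕ := a q with hb
    have hset : {x | ∀ p ∈ insert q S, x.factorization p = a p}
        = {x | x.factorization q = b} ∩ E := by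
      ext x
      simp [Finset.forall_mem_insert, hE, Set.mem_inter_iff, hb]
    have hsplit : {x | b ≤ x.factorization q} ∩ E
        = ({x | x.factorization q = b} ∩ E) ∪ ({x | b + 1 ≤ x.factorization q} ∩ E) := by
      ext x
      simp only [Set.mem_inter_iff, Set.mem_union, Set.mem_setOf_eq]
      constructor
      · rintro ⟨h1, h2⟩
        rcases eq_or_lt_of_le h1 with h | h
        · exact Or.inl ⟨h.symm, h2⟩
        · exact Or.inr ⟨h, h2⟩
      · rintro (⟨h1, h2⟩ | ⟨h1, h2⟩)
        · exact ⟨h1.ge, h2⟩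
        · exact ⟨le_trans (Nat.le_succ b) h1, h2⟩
    have hdisj : Disjoint ({x | x.factorization q = b} ∩ E)
        ({x | b + 1 ≤ x.factorization q} ∩ E) := by
      rw [Set.disjoint_left]
      rintro x ⟨h1, -⟩ ⟨h2, -⟩
      simp only [Set.mem_setOf_eq] at h1 h2
      rw [h1] at h2
      omega
    set c : ℝ≥0∞ := ENNReal.ofReal ((q : ℝ) ^ (-s)) with hc
    have hadd : c ^ b * zetaMeasure s E
        = zetaMeasure s ({x | x.factorization q = b} ∩ E)
          + c ^ (b + 1) * zetaMeasure s E := by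
      rw [← zm_scale s hs q hq S hqS a b, ← zm_scale s hs q hq S hqS a (b + 1), hsplit,
        measure_union hdisj MeasurableSet.of_discrete]
    have hfin : c ^ (b + 1) * zetaMeasure s E ≠ ⊤ :=
      ENNReal.mul_ne_top (by simp [hc]) (zm_ne_top s hs E)
    have heq : zetaMeasure s ({x | x.factorization q = b} ∩ E)
        = c ^ b * zetaMeasure s E - c ^ (b + 1) * zetaMeasure s E :=
      ENNReal.eq_sub_of_add_eq hfin hadd.symm
    have hx0 : (0:ℝ) ≤ (q : ℝ) ^ (-s) := Real.rpow_nonneg q.cast_nonneg _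
    have hcoef : c ^ b - c ^ (b + 1)
        = ENNReal.ofReal ((1 - (q : ℝ) ^ (-s)) * ((q : ℝ) ^ (-s)) ^ b) := by
      rw [hc, ← ENNReal.ofReal_pow hx0, ← ENNReal.ofReal_pow hx0,
        ← ENNReal.ofReal_sub _ (pow_nonneg hx0 _)]
      ring_nf
    rw [hset, heq, ← ENNReal.sub_mul (fun _ _ => zm_ne_top s hs E), hcoef,
      Finset.prod_insert hqS, ih hS']

theorem zeta_valuations_independent_geometric (s : ℝ) (hs : 1 < s)
    (r : ℕ) (p : Fin r → ℕ) (hp : ∀ i, Nat.Prime (p i)) (hinj : Function.Injective p)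
    (a : Fin r → ℕ) :
    zetaMeasure s {x | ∀ i, x.factorization (p i) = a i}
      = ENNReal.ofReal (∏ i, (1 - (p i : ℝ) ^ (-s)) * ((p i : ℝ) ^ (-s)) ^ (a i)) := by
  classical
  set S : Finset ℕ := Finset.image p Finset.univ with hSdef
  set a' : ℕ → ℕ := fun q => if h : ∃ i, p i = q then a h.choose else 0 with ha'
  have ha'p : ∀ i, a' (p i) = a i := by
    intro i
    have h : ∃ j, p j = p i := ⟨i, rfl⟩
    simp only [ha', dif_pos h]
    congr 1
    exact hinj h.choose_spec
  have hS : ∀ q ∈ S, Nat.Prime q := by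
    intro q hq
    rw [hSdef, Finset.mem_image] at hq
    obtain ⟨i, -, rfl⟩ := hq
    exact hp i
  have hnonneg : ∀ i : Fin r, 0 ≤ (1 - (p i : ℝ) ^ (-s)) * ((p i : ℝ) ^ (-s)) ^ (a i) := by
    intro i
    have h1 : (p i : ℝ) ^ (-s) ≤ 1 :=
      Real.rpow_le_one_of_one_le_of_nonpos
        (by exact_mod_cast (hp i).one_lt.le) (by linarith)
    have h0 : (0:ℝ) ≤ (p i : ℝ) ^ (-s) := Real.rpow_nonneg (p i).cast_nonneg _
    have := pow_nonneg h0 (a i)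
    nlinarith
  have hset : {x : ℕ | ∀ i, x.factorization (p i) = a i}
      = {x | ∀ q ∈ S, x.factorization q = a' q} := by
    ext x
    simp only [Set.mem_setOf_eq, hSdef, Finset.forall_mem_image, Finset.mem_univ,
      forall_true_left, true_implies]
    constructor
    · intro h i
      rw [ha'p i]; exact h i
    · intro h i
      rw [← ha'p i]; exact @h i
  rw [hset, zm_key s hs S hS a', hSdef,
    Finset.prod_image (fun i _ j _ h => hinj h),
    ENNReal.ofReal_prod_of_nonneg (fun i _ => hnonneg i)]
  exact Finset.prod_congr rfl fun i _ => by rw [ha'p i]
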